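/- Let n ≥ 1 and let u_0,…,u_n : D → ℝ be twice continuously differentiable functions on D = ℂ∖(−∞,0] with u_j + u_{n−j} = 0 for all j. For λ ∈ ℂ with |λ| = 1 and z ∈ D define (n+1)×(n+1) complex matrices P(λ,z) = diag((u_0)_z,…,(u_n)_z) + λ^{−1} z^{−1} C(z) and Q(λ,z) = λ z̄^{−1} F(z), where C(z) has entry z in position (0,n), entries 1 in positions (j,j−1) for 1 ≤ j ≤ n, and zeros elsewhere, and F(z) has entries e^{u_{j+1}−u_j} in positions (j,j+1) for 0 ≤ j ≤ n−1, entry z̄·e^{u_0−u_n} in position (n,0), and zeros elsewhere. Then the zero-curvature equation ∂_z Q − ∂_{z̄} P + PQ − QP = 0 holds on D for every λ with |λ| = 1 if and only if on D: (u_0)_{zz̄} = e^{u_0−u_n} − |z|^{−2} e^{u_1−u_0}; (u_j)_{zz̄} = |z|^{−2} e^{u_j−u_{j−1}} − |z|^{−2} e^{u_{j+1}−u_j} for 1 ≤ j ≤ n−1; and (u_n)_{zz̄} = |z|^{−2} e^{u_n−u_{n−1}} − e^{u_0−u_n}. -/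

import Mathlib

open scoped BigOperators

/-- The Wirtinger derivative `f_z = ½(∂f/∂x − i ∂f/∂y)`. -/
noncomputable def wirtingerDz (f : ℂ → ℂ) (z : ℂ) : ℂ :=
  (fderiv ℝ f z 1 - Complex.I * fderiv ℝ f z Complex.I) / 2

/-- The Wirtinger derivative `f_z̄ = ½(∂f/∂x + i ∂f/∂y)`. -/
noncomputable def wirtingerDzbar (f : ℂ → ℂ) (z : ℂ) : ℂ :=
  (fderiv ℝ f z 1 + Complex.I * fderiv ℝ f z Complex.I) / 2

/-- `u_{zz̄}` for a real-valued function `u`. -/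
noncomputable def uzzbar (u : ℂ → ℝ) (z : ℂ) : ℂ :=
  wirtingerDzbar (fun w => wirtingerDz (fun x => ((u x : ℝ) : ℂ)) w) z

/-- The matrix `C(z)`: entry `z` in position `(0,n)`, entries `1` in positions
`(j,j−1)` for `1 ≤ j ≤ n`, zeros elsewhere. -/
def Cmat (n : ℕ) (z : ℂ) : Matrix (Fin (n + 1)) (Fin (n + 1)) ℂ :=
  Matrix.of fun i j =>
    if (i : ℕ) = 0 ∧ (j : ℕ) = n then z
    else if (i : ℕ) = (j : ℕ) + 1 then 1 else 0

/-- The matrix `F(z)`: entries `e^{u_{j+1}−u_j}` in positions `(j,j+1)` for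
`0 ≤ j ≤ n−1`, entry `z̄·e^{u_0−u_n}` in position `(n,0)`, zeros elsewhere. -/
noncomputable def Fmat (n : ℕ) (u : Fin (n + 1) → ℂ → ℝ) (z : ℂ) :
    Matrix (Fin (n + 1)) (Fin (n + 1)) ℂ :=
  Matrix.of fun i j =>
    if (j : ℕ) = (i : ℕ) + 1 then (Real.exp (u j z - u i z) : ℂ)
    else if (i : ℕ) = n ∧ (j : ℕ) = 0 then
      (starRingEnd ℂ z) * (Real.exp (u 0 z - u (Fin.last n) z) : ℂ)
    else 0

/-- `P(λ,z) = diag((u_0)_z,…,(u_n)_z) + λ⁻¹ z⁻¹ C(z)`. -/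
noncomputable def Pmat (n : ℕ) (u : Fin (n + 1) → ℂ → ℝ) (lam z : ℂ) :
    Matrix (Fin (n + 1)) (Fin (n + 1)) ℂ :=
  Matrix.diagonal (fun j => wirtingerDz (fun w => ((u j w : ℝ) : ℂ)) z)
    + (lam⁻¹ * z⁻¹) • Cmat n z

/-- `Q(λ,z) = λ z̄⁻¹ F(z)`. -/
noncomputable def Qmat (n : ℕ) (u : Fin (n + 1) → ℂ → ℝ) (lam z : ℂ) :
    Matrix (Fin (n + 1)) (Fin (n + 1)) ℂ :=
  (lam * (starRingEnd ℂ z)⁻¹) • Fmat n u z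

/-! ### Auxiliary Wirtinger calculus lemmas -/

section W
variable {f g : ℂ → ℂ} {z c : ℂ}

lemma wdz_congr (h : f =ᶠ[nhds z] g) : wirtingerDz f z = wirtingerDz g z := by
  rw [wirtingerDz, wirtingerDz, h.fderiv_eq]

lemma wdzb_congr (h : f =ᶠ[nhds z] g) : wirtingerDzbar f z = wirtingerDzbar g z := by
  rw [wirtingerDzbar, wirtingerDzbar, h.fderiv_eq]

lemma wdz_const (c z : ℂ) : wirtingerDz (fun _ => c) z = 0 := by
  simp [wirtingerDz, fderiv_const]

lemma wdzb_const (c z : ℂ) : wirtingerDzbar (fun _ => c) z = 0 := by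
  simp [wirtingerDzbar, fderiv_const]

lemma wdz_sub (hf : DifferentiableAt ℝ f z) (hg : DifferentiableAt ℝ g z) :
    wirtingerDz (fun w => f w - g w) z = wirtingerDz f z - wirtingerDz g z := by
  simp only [wirtingerDz, fderiv_fun_sub hf hg, ContinuousLinearMap.sub_apply]
  ring

lemma wdz_const_mul (hf : DifferentiableAt ℝ f z) (c : ℂ) :
    wirtingerDz (fun w => c * f w) z = c * wirtingerDz f z := by
  simp only [wirtingerDz, fderiv_const_mul hf c, ContinuousLinearMap.smul_apply,
    smul_eq_mul]
  ring

lemma wdz_mul (hf : DifferentiableAt ℝ f z) (hg : DifferentiableAt ℝ g z) :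
    wirtingerDz (fun w => f w * g w) z
      = wirtingerDz f z * g z + f z * wirtingerDz g z := by
  simp only [wirtingerDz, fderiv_fun_mul hf hg, ContinuousLinearMap.add_apply,
    ContinuousLinearMap.smul_apply, smul_eq_mul]
  ring

lemma wdzb_holo (hf : DifferentiableAt ℂ f z) : wirtingerDzbar f z = 0 := by
  have h1 : fderiv ℝ f z = (fderiv ℂ f z).restrictScalars ℝ :=
    hf.hasFDerivAt.restrictScalars ℝ |>.fderiv
  have h2 : fderiv ℂ f z Complex.I = Complex.I * fderiv ℂ f z 1 := by
    have := (fderiv ℂ f z).map_smul Complex.I (1 : ℂ)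
    simpa [smul_eq_mul] using this
  rw [wirtingerDzbar, h1]
  simp only [ContinuousLinearMap.coe_restrictScalars', h2]
  have : Complex.I * (Complex.I * (fderiv ℂ f z) 1) = -((fderiv ℂ f z) 1) := by
    rw [← mul_assoc, Complex.I_mul_I]; ring
  rw [this]; ring

lemma wdz_conj_comp (hf : DifferentiableAt ℂ f z) :
    wirtingerDz (fun w => (starRingEnd ℂ) (f w)) z = 0 := by
  have hd : HasFDerivAt (fun w => (starRingEnd ℂ) (f w))
      ((Complex.conjCLE.toContinuousLinearMap).comp
        ((fderiv ℂ f z).restrictScalars ℝ)) z :=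
    (Complex.conjCLE.toContinuousLinearMap.hasFDerivAt).comp z
      (hf.hasFDerivAt.restrictScalars ℝ)
  have h2 : fderiv ℂ f z Complex.I = Complex.I * fderiv ℂ f z 1 := by
    have := (fderiv ℂ f z).map_smul Complex.I (1 : ℂ)
    simpa [smul_eq_mul] using this
  rw [wirtingerDz, hd.fderiv]
  simp only [ContinuousLinearMap.coe_comp', Function.comp_apply,
    ContinuousLinearMap.coe_restrictScalars', ContinuousLinearEquiv.coe_coe,
    Complex.conjCLE_apply, h2, map_mul, Complex.conj_I]
  ring_nf
  rw [Complex.I_sq]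
  ring

lemma wdz_comp_holo {g : ℂ → ℂ} (hg : DifferentiableAt ℂ g (f z))
    (hf : DifferentiableAt ℝ f z) :
    wirtingerDz (fun w => g (f w)) z = deriv g (f z) * wirtingerDz f z := by
  have hd : HasFDerivAt (fun w => g (f w))
      (((fderiv ℂ g (f z)).restrictScalars ℝ).comp (fderiv ℝ f z)) z :=
    (hg.hasFDerivAt.restrictScalars ℝ).comp z hf.hasFDerivAt
  have key : ∀ v : ℂ, fderiv ℂ g (f z) v = deriv g (f z) * v := by
    intro v
    have := (fderiv ℂ g (f z)).map_smul v (1 : ℂ)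
    simp only [smul_eq_mul, mul_one] at this
    rw [this, ← fderiv_apply_one_eq_deriv]; ring
  rw [wirtingerDz, hd.fderiv]
  simp only [ContinuousLinearMap.coe_comp', Function.comp_apply,
    ContinuousLinearMap.coe_restrictScalars', key]
  rw [wirtingerDz]; ring

lemma diff_ofReal_comp {v : ℂ → ℝ} (hv : DifferentiableAt ℝ v z) :
    DifferentiableAt ℝ (fun w => ((v w : ℝ) : ℂ)) z :=
  Complex.ofRealCLM.differentiableAt.comp z hv

end W

section Main

variable {n : ℕ} {u : Fin (n + 1) → ℂ → ℝ} {z lam : ℂ}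

lemma diffu (hu : ∀ j, ContDiffOn ℝ 2 (u j) Complex.slitPlane)
    (hz : z ∈ Complex.slitPlane) (j : Fin (n + 1)) :
    DifferentiableAt ℝ (fun w => ((u j w : ℝ) : ℂ)) z :=
  diff_ofReal_comp
    (((hu j).contDiffAt (Complex.isOpen_slitPlane.mem_nhds hz)).differentiableAt
      (by norm_num))

lemma wdz_expu (hu : ∀ j, ContDiffOn ℝ 2 (u j) Complex.slitPlane)
    (hz : z ∈ Complex.slitPlane) (a b : Fin (n + 1)) :
    wirtingerDz (fun w => ((Real.exp (u a w - u b w) : ℝ) : ℂ)) z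
      = (Real.exp (u a z - u b z) : ℂ)
        * (wirtingerDz (fun w => ((u a w : ℝ) : ℂ)) z
           - wirtingerDz (fun w => ((u b w : ℝ) : ℂ)) z) := by
  have hfa := diffu hu hz a
  have hfb := diffu hu hz b
  have hrw : (fun w => ((Real.exp (u a w - u b w) : ℝ) : ℂ))
      = fun w => Complex.exp (((u a w : ℝ) : ℂ) - ((u b w : ℝ) : ℂ)) := by
    funext w; rw [Complex.ofReal_exp, Complex.ofReal_sub]
  rw [hrw, wdz_comp_holo (f := fun w => ((u a w : ℝ) : ℂ) - ((u b w : ℝ) : ℂ))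
      (Complex.differentiable_exp.differentiableAt) (hfa.sub hfb),
    Complex.deriv_exp, wdz_sub hfa hfb, ← Complex.ofReal_sub, ← Complex.ofReal_exp]

/-- closed form for the `(i,j)` entry of `C*F`. -/
lemma CF_apply (i j : Fin (n + 1)) :
    (Cmat n z * Fmat n u z) i j
      = if (i : ℕ) = 0 then z * Fmat n u z (Fin.last n) j
        else Fmat n u z (i - 1) j := by
  rw [Matrix.mul_apply]
  by_cases h : (i : ℕ) = 0
  · rw [if_pos h]
    rw [Fintype.sum_eq_single (Fin.last n)]
    · congr 1
      simp [Cmat, h, Fin.val_last, -Fin.val_eq_zero_iff]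
    · intro k hk
      have h1 : ¬((i : ℕ) = 0 ∧ (k : ℕ) = n) := by
        rintro ⟨-, hk2⟩
        exact hk (Fin.ext (by simp [hk2, Fin.val_last]))
      have h2 : ¬((i : ℕ) = (k : ℕ) + 1) := by omega
      simp [Cmat, h1, h2, -Fin.val_eq_zero_iff]
  · rw [if_neg h]
    have hi0 : i ≠ 0 := fun hh => h (by simp [hh])
    have hsub : ((i - 1 : Fin (n + 1)) : ℕ) = (i : ℕ) - 1 := by
      rw [Fin.coe_sub_one, if_neg hi0]
    rw [Fintype.sum_eq_single (i - 1)]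
    · have h1 : ¬((i : ℕ) = 0 ∧ ((i - 1 : Fin (n + 1)) : ℕ) = n) := by
        rintro ⟨h0, -⟩; exact h h0
      have h2 : (i : ℕ) = ((i - 1 : Fin (n + 1)) : ℕ) + 1 := by
        rw [hsub]; omega
      simp [Cmat, h1, h2, -Fin.val_eq_zero_iff]
    · intro k hk
      have hkv : (k : ℕ) ≠ (i : ℕ) - 1 := by
        intro hh; exact hk (Fin.ext (by rw [hsub, hh]))
      have h1 : ¬((i : ℕ) = 0 ∧ (k : ℕ) = n) := by
        rintro ⟨h0, -⟩; exact h h0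
      have h2 : ¬((i : ℕ) = (k : ℕ) + 1) := by omega
      simp [Cmat, h1, h2, -Fin.val_eq_zero_iff]

/-- closed form for the `(i,j)` entry of `F*C`. -/
lemma FC_apply (i j : Fin (n + 1)) :
    (Fmat n u z * Cmat n z) i j
      = if (i : ℕ) = n then
          ((starRingEnd ℂ z) * (Real.exp (u 0 z - u (Fin.last n) z) : ℂ))
            * Cmat n z 0 j
        else (Real.exp (u (i + 1) z - u i z) : ℂ) * Cmat n z (i + 1) j := by
  rw [Matrix.mul_apply]
  by_cases h : (i : ℕ) = n
  · rw [if_pos h]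
    rw [Fintype.sum_eq_single (0 : Fin (n + 1))]
    · congr 1
      have h1 : ¬((0 : ℕ) = (i : ℕ) + 1) := by omega
      simp [Fmat, h, h1]
    · intro k hk
      have hk0 : (k : ℕ) ≠ 0 := by
        intro hh; exact hk (Fin.ext (by simp [hh]))
      have h1 : ¬((k : ℕ) = (i : ℕ) + 1) := by
        have := k.isLt; omega
      have h2 : ¬((i : ℕ) = n ∧ (k : ℕ) = 0) := by tauto
      simp [Fmat, h1, h2, -Fin.val_eq_zero_iff]
  · rw [if_neg h]
    have hlt : (i : ℕ) < n := by have := i.isLt; omega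
    have hine : i ≠ Fin.last n := by
      intro hh; exact h (by rw [hh, Fin.val_last])
    have hadd : ((i + 1 : Fin (n + 1)) : ℕ) = (i : ℕ) + 1 := by
      rw [Fin.val_add_one, if_neg hine]
    rw [Fintype.sum_eq_single (i + 1)]
    · congr 1
      simp [Fmat, hadd]
    · intro k hk
      have hkv : (k : ℕ) ≠ (i : ℕ) + 1 := by
        intro hh; exact hk (Fin.ext (by rw [hadd, hh]))
      have h2 : ¬((i : ℕ) = n ∧ (k : ℕ) = 0) := by tauto
      simp [Fmat, hkv, h2, -Fin.val_eq_zero_iff]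

/-- the diagonal value of the commutator `[C,F]`. -/
noncomputable def cfd (n : ℕ) (u : Fin (n + 1) → ℂ → ℝ) (z : ℂ) (i : Fin (n + 1)) : ℂ :=
  (if (i : ℕ) = 0 then
      z * ((starRingEnd ℂ z) * (Real.exp (u 0 z - u (Fin.last n) z) : ℂ))
    else (Real.exp (u i z - u (i - 1) z) : ℂ))
  - (if (i : ℕ) = n then
      ((starRingEnd ℂ z) * (Real.exp (u 0 z - u (Fin.last n) z) : ℂ)) * z
    else (Real.exp (u (i + 1) z - u i z) : ℂ))

lemma comm_CF (hn : 1 ≤ n) (i j : Fin (n + 1)) :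
    (Cmat n z * Fmat n u z - Fmat n u z * Cmat n z) i j
      = if i = j then cfd n u z i else 0 := by
  rw [Matrix.sub_apply, CF_apply, FC_apply]
  by_cases hij : i = j
  · subst hij
    rw [if_pos rfl, cfd]
    congr 1
    · by_cases h : (i : ℕ) = 0
      · rw [if_pos h, if_pos h]
        have hF : Fmat n u z (Fin.last n) i
            = (starRingEnd ℂ z) * (Real.exp (u 0 z - u (Fin.last n) z) : ℂ) := by
          have h1 : ¬((i : ℕ) = (Fin.last n : Fin (n + 1)).val + 1) := by
            rw [Fin.val_last]; omega
          simp only [Fmat, Matrix.of_apply]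
          rw [if_neg h1, if_pos ⟨Fin.val_last n, h⟩]
        rw [hF]
      · rw [if_neg h, if_neg h]
        have hi0 : i ≠ 0 := fun hh => h (by simp [hh])
        have hsub : ((i - 1 : Fin (n + 1)) : ℕ) = (i : ℕ) - 1 := by
          rw [Fin.coe_sub_one, if_neg hi0]
        have h1 : (i : ℕ) = ((i - 1 : Fin (n + 1)) : ℕ) + 1 := by
          rw [hsub]; omega
        simp [Fmat, h1]
    · by_cases h : (i : ℕ) = n
      · rw [if_pos h, if_pos h]
        have hC : Cmat n z 0 i = z := by
          simp [Cmat, h]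
        rw [hC]
      · rw [if_neg h, if_neg h]
        have hlt : (i : ℕ) < n := by have := i.isLt; omega
        have hine : i ≠ Fin.last n := by
          intro hh; exact h (by rw [hh, Fin.val_last])
        have hadd : ((i + 1 : Fin (n + 1)) : ℕ) = (i : ℕ) + 1 := by
          rw [Fin.val_add_one, if_neg hine]
        have hC : Cmat n z (i + 1) i = 1 := by
          have h1 : ¬(((i + 1 : Fin (n + 1)) : ℕ) = 0 ∧ (i : ℕ) = n) := by
            rintro ⟨-, hh⟩; exact h hh
          simp [Cmat, h1, hadd, -Fin.val_eq_zero_iff]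
        rw [hC, mul_one]
  · rw [if_neg hij]
    have hvne : (i : ℕ) ≠ (j : ℕ) := fun hh => hij (Fin.ext hh)
    have hL : (if (i : ℕ) = 0 then z * Fmat n u z (Fin.last n) j
        else Fmat n u z (i - 1) j) = 0 := by
      by_cases h : (i : ℕ) = 0
      · rw [if_pos h]
        have h1 : ¬((j : ℕ) = (Fin.last n : Fin (n + 1)).val + 1) := by
          rw [Fin.val_last]; have := j.isLt; omega
        have h2 : ¬((Fin.last n : Fin (n + 1)).val = n ∧ (j : ℕ) = 0) := by
          rintro ⟨-, hh⟩; exact hvne (by omega)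
        simp only [Fmat, Matrix.of_apply]
        rw [if_neg h1, if_neg h2, mul_zero]
      · rw [if_neg h]
        have hi0 : i ≠ 0 := fun hh => h (by simp [hh])
        have hsub : ((i - 1 : Fin (n + 1)) : ℕ) = (i : ℕ) - 1 := by
          rw [Fin.coe_sub_one, if_neg hi0]
        have h1 : ¬((j : ℕ) = ((i - 1 : Fin (n + 1)) : ℕ) + 1) := by
          rw [hsub]; omega
        have h2 : ¬(((i - 1 : Fin (n + 1)) : ℕ) = n ∧ (j : ℕ) = 0) := by
          rintro ⟨hh, -⟩; rw [hsub] at hh; have := i.isLt; omega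
        simp [Fmat, h1, h2, -Fin.val_eq_zero_iff]
    have hR : (if (i : ℕ) = n then
          ((starRingEnd ℂ z) * (Real.exp (u 0 z - u (Fin.last n) z) : ℂ))
            * Cmat n z 0 j
        else (Real.exp (u (i + 1) z - u i z) : ℂ) * Cmat n z (i + 1) j) = 0 := by
      by_cases h : (i : ℕ) = n
      · rw [if_pos h]
        have h1 : ¬((0 : Fin (n + 1)).val = 0 ∧ (j : ℕ) = n) := by
          rintro ⟨-, hh⟩; exact hvne (by omega)
        have h2 : ¬((0 : Fin (n + 1)).val = (j : ℕ) + 1) := by simp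
        simp only [Cmat, Matrix.of_apply]
        rw [if_neg h1, if_neg h2, mul_zero]
      · rw [if_neg h]
        have hine : i ≠ Fin.last n := by
          intro hh; exact h (by rw [hh, Fin.val_last])
        have hadd : ((i + 1 : Fin (n + 1)) : ℕ) = (i : ℕ) + 1 := by
          rw [Fin.val_add_one, if_neg hine]
        have h1 : ¬(((i + 1 : Fin (n + 1)) : ℕ) = 0 ∧ (j : ℕ) = n) := by
          rintro ⟨hh, -⟩; rw [hadd] at hh; omega
        have h2 : ¬(((i + 1 : Fin (n + 1)) : ℕ) = (j : ℕ) + 1) := by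
          rw [hadd]; omega
        simp [Cmat, h1, h2, -Fin.val_eq_zero_iff]
    rw [hL, hR, sub_zero]

lemma diffur (hu : ∀ j, ContDiffOn ℝ 2 (u j) Complex.slitPlane)
    (hz : z ∈ Complex.slitPlane) (j : Fin (n + 1)) :
    DifferentiableAt ℝ (u j) z :=
  ((hu j).contDiffAt (Complex.isOpen_slitPlane.mem_nhds hz)).differentiableAt
    (by norm_num)

lemma diff_expu (hu : ∀ j, ContDiffOn ℝ 2 (u j) Complex.slitPlane)
    (hz : z ∈ Complex.slitPlane) (a b : Fin (n + 1)) :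
    DifferentiableAt ℝ (fun w => ((Real.exp (u a w - u b w) : ℝ) : ℂ)) z :=
  diff_ofReal_comp (((diffur hu hz a).sub (diffur hu hz b)).exp)

lemma diff_conj_inv (hz0 : z ≠ 0) :
    DifferentiableAt ℝ (fun w => ((starRingEnd ℂ) w)⁻¹) z := by
  have : (fun w => ((starRingEnd ℂ) w)⁻¹) = fun w => (starRingEnd ℂ) (w⁻¹) := by
    funext w; rw [map_inv₀]
  rw [this]
  exact Complex.conjCLE.differentiableAt.comp z
    (((differentiableAt_inv hz0 : DifferentiableAt ℂ _ z)).restrictScalars ℝ)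

lemma wdz_conj_inv (hz0 : z ≠ 0) :
    wirtingerDz (fun w => ((starRingEnd ℂ) w)⁻¹) z = 0 := by
  have : (fun w => ((starRingEnd ℂ) w)⁻¹) = fun w => (starRingEnd ℂ) (w⁻¹) := by
    funext w; rw [map_inv₀]
  rw [this]
  exact wdz_conj_comp (differentiableAt_inv hz0)

/-- `∂_z` of the `(i,j)` entry of `Q`. -/
lemma wdz_Q (hn : 1 ≤ n) (hu : ∀ j, ContDiffOn ℝ 2 (u j) Complex.slitPlane)
    (hz : z ∈ Complex.slitPlane) (i j : Fin (n + 1)) :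
    wirtingerDz (fun w => Qmat n u lam w i j) z
      = lam * ((starRingEnd ℂ) z)⁻¹ * (Fmat n u z i j
          * (wirtingerDz (fun w => ((u j w : ℝ) : ℂ)) z
             - wirtingerDz (fun w => ((u i w : ℝ) : ℂ)) z)) := by
  have hz0 : z ≠ 0 := Complex.slitPlane_ne_zero hz
  have hcz : (starRingEnd ℂ) z ≠ 0 := by
    simpa using hz0
  by_cases hA : (j : ℕ) = (i : ℕ) + 1
  · have hfun : (fun w => Qmat n u lam w i j)
        = fun w => lam * (((starRingEnd ℂ) w)⁻¹
            * ((Real.exp (u j w - u i w) : ℝ) : ℂ)) := by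
      funext w
      simp only [Qmat, Matrix.smul_apply, smul_eq_mul, Fmat, Matrix.of_apply,
        if_pos hA]
      ring
    have hFz : Fmat n u z i j = ((Real.exp (u j z - u i z) : ℝ) : ℂ) := by
      simp [Fmat, hA]
    rw [hfun, wdz_const_mul (f := fun w => ((starRingEnd ℂ) w)⁻¹ * ((Real.exp (u j w - u i w) : ℝ) : ℂ))
        ((diff_conj_inv hz0).mul (diff_expu hu hz j i)) lam,
      wdz_mul (diff_conj_inv hz0) (diff_expu hu hz j i), wdz_conj_inv hz0,
      wdz_expu hu hz j i, hFz]
    ring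
  · by_cases hB : (i : ℕ) = n ∧ (j : ℕ) = 0
    · have hi : i = Fin.last n := Fin.ext (by rw [Fin.val_last]; exact hB.1)
      have hj : j = 0 := Fin.ext (by simpa using hB.2)
      subst hi; subst hj
      have hfun : (fun w => Qmat n u lam w (Fin.last n) 0)
          =ᶠ[nhds z] fun w =>
            lam * ((Real.exp (u 0 w - u (Fin.last n) w) : ℝ) : ℂ) := by
        filter_upwards [Complex.isOpen_slitPlane.mem_nhds hz] with w hw
        have hw0 : (starRingEnd ℂ) w ≠ 0 := by
          simpa using Complex.slitPlane_ne_zero hw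
        have hc : ¬((0 : Fin (n + 1)).val = (Fin.last n : Fin (n + 1)).val + 1) := by
          simp
        have hFw : Fmat n u w (Fin.last n) 0
            = (starRingEnd ℂ) w
              * ((Real.exp (u 0 w - u (Fin.last n) w) : ℝ) : ℂ) := by
          simp [Fmat, hc]
        simp only [Qmat, Matrix.smul_apply, smul_eq_mul]
        rw [hFw, mul_assoc lam, ← mul_assoc (((starRingEnd ℂ) w)⁻¹),
          inv_mul_cancel₀ hw0, one_mul]
      have hFz : Fmat n u z (Fin.last n) 0
          = (starRingEnd ℂ) z * ((Real.exp (u 0 z - u (Fin.last n) z) : ℝ) : ℂ) := by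
        have hc : ¬((0 : Fin (n + 1)).val = (Fin.last n : Fin (n + 1)).val + 1) := by
          simp
        simp [Fmat, hc]
      rw [wdz_congr hfun, wdz_const_mul (diff_expu hu hz 0 (Fin.last n)) lam,
        wdz_expu hu hz 0 (Fin.last n), hFz]
      field_simp
    · have hF : ∀ w : ℂ, Fmat n u w i j = 0 := by
        intro w; simp [Fmat, hA, hB, -Fin.val_eq_zero_iff]
      have hfun : (fun w => Qmat n u lam w i j) = fun _ => (0 : ℂ) := by
        funext w
        simp [Qmat, Matrix.smul_apply, hF w]
      rw [hfun, wdz_const, hF z]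
      ring

/-- `∂_z̄` of the `(i,j)` entry of `P`. -/
lemma wdzb_P (hn : 1 ≤ n) (hz : z ∈ Complex.slitPlane) (i j : Fin (n + 1)) :
    wirtingerDzbar (fun w => Pmat n u lam w i j) z
      = if i = j then uzzbar (u i) z else 0 := by
  have hz0 : z ≠ 0 := Complex.slitPlane_ne_zero hz
  by_cases hij : i = j
  · subst hij
    rw [if_pos rfl]
    have hC : ∀ w : ℂ, Cmat n w i i = 0 := by
      intro w
      have h1 : ¬((i : ℕ) = 0 ∧ (i : ℕ) = n) := by omega
      have h2 : ¬((i : ℕ) = (i : ℕ) + 1) := by omega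
      simp [Cmat, h1, h2, -Fin.val_eq_zero_iff]
    have hfun : (fun w => Pmat n u lam w i i)
        = fun w => wirtingerDz (fun x => ((u i x : ℝ) : ℂ)) w := by
      funext w
      simp [Pmat, Matrix.add_apply, Matrix.diagonal_apply_eq, Matrix.smul_apply,
        hC w]
    rw [hfun]
    rfl
  · rw [if_neg hij]
    have hfun : (fun w => Pmat n u lam w i j)
        = fun w => (lam⁻¹ * w⁻¹) * Cmat n w i j := by
      funext w
      simp [Pmat, Matrix.add_apply, Matrix.diagonal_apply_ne _ hij,
        Matrix.smul_apply, smul_eq_mul]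
    by_cases h1 : (i : ℕ) = 0 ∧ (j : ℕ) = n
    · have hev : (fun w => Pmat n u lam w i j) =ᶠ[nhds z] fun _ => lam⁻¹ := by
        filter_upwards [Complex.isOpen_slitPlane.mem_nhds hz] with w hw
        have hw0 : w ≠ 0 := Complex.slitPlane_ne_zero hw
        rw [congrFun hfun w]
        simp only [Cmat, Matrix.of_apply, if_pos h1]
        rw [mul_assoc, inv_mul_cancel₀ hw0, mul_one]
      rw [wdzb_congr hev, wdzb_const]
    · by_cases h2 : (i : ℕ) = (j : ℕ) + 1
      · have hfun2 : (fun w => Pmat n u lam w i j) = fun w => lam⁻¹ * w⁻¹ := by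
          rw [hfun]; funext w
          simp [Cmat, h1, h2, -Fin.val_eq_zero_iff]
        rw [hfun2]
        exact wdzb_holo ((differentiableAt_inv hz0).const_mul _)
      · have hfun2 : (fun w => Pmat n u lam w i j) = fun _ => (0 : ℂ) := by
          rw [hfun]; funext w
          simp [Cmat, h1, h2, -Fin.val_eq_zero_iff]
        rw [hfun2, wdzb_const]

/-- the `(i,j)` entry of the commutator `[P,Q]`. -/
lemma comm_PQ (hn : 1 ≤ n) (hlam : lam ≠ 0) (i j : Fin (n + 1)) :
    (Pmat n u lam z * Qmat n u lam z - Qmat n u lam z * Pmat n u lam z) i j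
      = lam * ((starRingEnd ℂ) z)⁻¹
          * ((wirtingerDz (fun w => ((u i w : ℝ) : ℂ)) z
              - wirtingerDz (fun w => ((u j w : ℝ) : ℂ)) z) * Fmat n u z i j)
        + (z⁻¹ * ((starRingEnd ℂ) z)⁻¹) * (if i = j then cfd n u z i else 0) := by
  have key : (Pmat n u lam z * Qmat n u lam z - Qmat n u lam z * Pmat n u lam z) i j
      = (lam * ((starRingEnd ℂ) z)⁻¹)
          * ((wirtingerDz (fun w => ((u i w : ℝ) : ℂ)) z
              - wirtingerDz (fun w => ((u j w : ℝ) : ℂ)) z) * Fmat n u z i j)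
        + ((lam⁻¹ * z⁻¹) * (lam * ((starRingEnd ℂ) z)⁻¹))
          * ((Cmat n z * Fmat n u z - Fmat n u z * Cmat n z) i j) := by
    simp only [Pmat, Qmat, Matrix.add_mul, Matrix.mul_add, Matrix.mul_smul,
      Matrix.smul_mul, Matrix.sub_apply, Matrix.add_apply, Matrix.smul_apply,
      Matrix.diagonal_mul, Matrix.mul_diagonal, smul_eq_mul]
    ring
  have hsc : lam⁻¹ * z⁻¹ * (lam * ((starRingEnd ℂ) z)⁻¹)
      = (lam⁻¹ * lam) * (z⁻¹ * ((starRingEnd ℂ) z)⁻¹) := by ring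
  rw [key, comm_CF hn, hsc, inv_mul_cancel₀ hlam, one_mul]

/-- The master entry computation. -/
lemma entry_master (hn : 1 ≤ n) (hu : ∀ j, ContDiffOn ℝ 2 (u j) Complex.slitPlane)
    (hz : z ∈ Complex.slitPlane) (hlam : lam ≠ 0) (i j : Fin (n + 1)) :
    wirtingerDz (fun w => Qmat n u lam w i j) z
        - wirtingerDzbar (fun w => Pmat n u lam w i j) z
        + (Pmat n u lam z * Qmat n u lam z - Qmat n u lam z * Pmat n u lam z) i j
      = if i = j then
          (z⁻¹ * ((starRingEnd ℂ) z)⁻¹) * cfd n u z i - uzzbar (u i) z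
        else 0 := by
  rw [wdz_Q hn hu hz, wdzb_P hn hz, comm_PQ hn hlam]
  by_cases hij : i = j
  · subst hij; simp only [eq_self_iff_true, if_true]; ring
  · simp only [if_neg hij]; ring

end Main

lemma abs_sq_inv (z : ℂ) :
    (((‖z‖ : ℂ)) ^ 2)⁻¹ = z⁻¹ * ((starRingEnd ℂ) z)⁻¹ := by
  have h : ((‖z‖ : ℂ)) ^ 2 = z * (starRingEnd ℂ) z := by
    rw [Complex.mul_conj, ← Complex.sq_norm]; push_cast; ring
  rw [h, mul_inv]

/-- **Proposition 3.2 of the paper.**  For `u_0,…,u_n : ℂ∖(−∞,0] → ℝ` of class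
`C²` with `u_j + u_{n−j} = 0`, the zero-curvature equation
`∂_z Q − ∂_{z̄} P + PQ − QP = 0` holds for every `λ` with `|λ| = 1` if and only
if the `u_j` satisfy the tt*-Toda system. -/
theorem zero_curvature_iff_ttToda (n : ℕ) (hn : 1 ≤ n)
    (u : Fin (n + 1) → ℂ → ℝ)
    (hu : ∀ j, ContDiffOn ℝ 2 (u j) Complex.slitPlane)
    (hanti : ∀ j, ∀ z ∈ Complex.slitPlane, u j z + u (Fin.rev j) z = 0) :
    (∀ lam : ℂ, ‖lam‖ = 1 → ∀ z ∈ Complex.slitPlane,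
        ∀ i j : Fin (n + 1),
          wirtingerDz (fun w => Qmat n u lam w i j) z
            - wirtingerDzbar (fun w => Pmat n u lam w i j) z
            + (Pmat n u lam z * Qmat n u lam z - Qmat n u lam z * Pmat n u lam z) i j
            = 0)
    ↔ (∀ z ∈ Complex.slitPlane,
        (uzzbar (u 0) z
            = (Real.exp (u 0 z - u (Fin.last n) z) : ℂ)
              - ((‖z‖ : ℂ) ^ 2)⁻¹ * (Real.exp (u 1 z - u 0 z) : ℂ))
        ∧ (∀ j : Fin (n + 1), 1 ≤ (j : ℕ) → (j : ℕ) ≤ n - 1 →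
            uzzbar (u j) z
              = ((‖z‖ : ℂ) ^ 2)⁻¹ * (Real.exp (u j z - u (j - 1) z) : ℂ)
                - ((‖z‖ : ℂ) ^ 2)⁻¹ * (Real.exp (u (j + 1) z - u j z) : ℂ))
        ∧ (uzzbar (u (Fin.last n)) z
            = ((‖z‖ : ℂ) ^ 2)⁻¹
                * (Real.exp (u (Fin.last n) z - u (Fin.last n - 1) z) : ℂ)
              - (Real.exp (u 0 z - u (Fin.last n) z) : ℂ))) := by
  constructor
  · intro h z hz
    have hz0 : z ≠ 0 := Complex.slitPlane_ne_zero hz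
    have hcz : (starRingEnd ℂ) z ≠ 0 := by simpa using hz0
    have key : ∀ i : Fin (n + 1),
        uzzbar (u i) z = z⁻¹ * ((starRingEnd ℂ) z)⁻¹ * cfd n u z i := by
      intro i
      have h1 := h 1 (by simp) z hz i i
      rw [entry_master hn hu hz one_ne_zero i i, if_pos rfl] at h1
      exact (sub_eq_zero.mp h1).symm
    refine ⟨?_, ?_, ?_⟩
    · rw [key 0, cfd, if_pos (Fin.val_zero _),
        if_neg (by rw [Fin.val_zero]; omega : ¬((0 : Fin (n + 1)) : ℕ) = n),
        zero_add, abs_sq_inv]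
      field_simp
    · intro j hj1 hj2
      rw [key j, cfd, if_neg (by omega : ¬(j : ℕ) = 0),
        if_neg (by omega : ¬(j : ℕ) = n), abs_sq_inv]
      ring
    · rw [key (Fin.last n), cfd,
        if_neg (by rw [Fin.val_last]; omega : ¬((Fin.last n : Fin (n + 1)) : ℕ) = 0),
        if_pos (Fin.val_last n), abs_sq_inv]
      field_simp
  · intro h lam hlam z hz i j
    have hz0 : z ≠ 0 := Complex.slitPlane_ne_zero hz
    have hcz : (starRingEnd ℂ) z ≠ 0 := by simpa using hz0
    have hlam0 : lam ≠ 0 := by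
      intro hh; rw [hh] at hlam; simp at hlam
    rw [entry_master hn hu hz hlam0 i j]
    by_cases hij : i = j
    · subst hij
      rw [if_pos rfl, sub_eq_zero]
      obtain ⟨h0, hmid, hlast⟩ := h z hz
      by_cases hi0 : (i : ℕ) = 0
      · have : i = 0 := Fin.ext (by rw [Fin.val_zero]; exact hi0)
        subst this
        rw [h0, cfd, if_pos (Fin.val_zero _),
          if_neg (by rw [Fin.val_zero]; omega : ¬((0 : Fin (n + 1)) : ℕ) = n),
          zero_add, abs_sq_inv]
        field_simp
      · by_cases hin : (i : ℕ) = n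
        · have : i = Fin.last n := Fin.ext (by rw [Fin.val_last]; exact hin)
          subst this
          rw [hlast, cfd,
            if_neg (by rw [Fin.val_last]; omega :
              ¬((Fin.last n : Fin (n + 1)) : ℕ) = 0),
            if_pos (Fin.val_last n), abs_sq_inv]
          field_simp
        · rw [hmid i (by omega) (by have := i.isLt; omega), cfd,
            if_neg hi0, if_neg hin, abs_sq_inv]
          ring
    · rw [if_neg hij]
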